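/- Define recursively ρ₀^1, ρ₁^1 as fixed density matrices on ℂ², and for k ≥ 2: ρ₀^k = (ρ₀^{k−1} ⊗ ρ₀^1 + ρ₁^{k−1} ⊗ ρ₁^1)/2 and ρ₁^k = (ρ₀^{k−1} ⊗ ρ₁^1 + ρ₁^{k−1} ⊗ ρ₀^1)/2. Then the trace distance satisfies D(ρ₀^k, ρ₁^k) = D(ρ₀^1, ρ₁^1)^k for all k ≥ 1. -/

import Mathlib

open Matrix Kronecker ComplexOrder

/-- `|M| = √(Mᴴ M)`, the positive-semidefinite absolute value of a matrix. -/
noncomputable def matAbs {n : Type*} [Fintype n] [DecidableEq n]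
    (M : Matrix n n ℂ) : Matrix n n ℂ :=
  (Matrix.posSemidef_conjTranspose_mul_self M).1.eigenvectorUnitary.1 *
    diagonal (((↑) : ℝ → ℂ) ∘ Real.sqrt ∘ (Matrix.posSemidef_conjTranspose_mul_self M).1.eigenvalues) *
    (star (Matrix.posSemidef_conjTranspose_mul_self M).1.eigenvectorUnitary : Matrix n n ℂ)

/-- Trace distance `D(A,B) = (1/2) Tr |A - B|`. -/
noncomputable def traceDist {n : Type*} [Fintype n] [DecidableEq n]
    (A B : Matrix n n ℂ) : ℝ :=
  (1 / 2) * (Matrix.trace (matAbs (A - B))).re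

section Aux

variable {n m : Type*} [Fintype n] [DecidableEq n] [Fintype m] [DecidableEq m]

open scoped MatrixOrder

lemma matAbs_eq_cfc (M : Matrix n n ℂ) : matAbs M = cfc Real.sqrt (Mᴴ * M) := by
  rw [(Matrix.posSemidef_conjTranspose_mul_self M).1.cfc_eq, IsHermitian.cfc,
    Unitary.conjStarAlgAut_apply]
  rfl

lemma matAbs_eq_of {M B : Matrix n n ℂ} (hB : B.PosSemidef) (h : B ^ 2 = Mᴴ * M) :
    matAbs M = B := by
  have hB0 : 0 ≤ B := hB.nonneg
  have hBs : IsSelfAdjoint B := hB.1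
  rw [matAbs_eq_cfc, ← h, ← cfc_pow_id (R := ℝ) B 2 hBs,
    ← cfc_comp Real.sqrt (fun x : ℝ => x ^ 2) B hBs]
  conv_rhs => rw [← cfc_id' ℝ B hBs]
  exact cfc_congr fun x hx => by
    simp [Real.sqrt_sq (spectrum_nonneg_of_nonneg hB0 hx)]

lemma matAbs_posSemidef (M : Matrix n n ℂ) : (matAbs M).PosSemidef := by
  rw [matAbs_eq_cfc]
  exact nonneg_iff_posSemidef.mp (cfc_nonneg fun x _ => Real.sqrt_nonneg x)

lemma matAbs_sq (M : Matrix n n ℂ) : matAbs M ^ 2 = Mᴴ * M := by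
  have h0 : 0 ≤ Mᴴ * M := (Matrix.posSemidef_conjTranspose_mul_self M).nonneg
  have hs : IsSelfAdjoint (Mᴴ * M) := (Matrix.posSemidef_conjTranspose_mul_self M).1
  rw [matAbs_eq_cfc, ← cfc_pow Real.sqrt 2 (Mᴴ * M) (ha := hs)]
  conv_rhs => rw [← cfc_id' ℝ (Mᴴ * M) hs]
  exact cfc_congr fun x hx => by
    simp [Real.sq_sqrt (spectrum_nonneg_of_nonneg h0 hx)]

omit [Fintype n] [DecidableEq n] [Fintype m] [DecidableEq m] in
lemma conjTranspose_kronecker (A : Matrix n n ℂ) (B : Matrix m m ℂ) :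
    (A ⊗ₖ B)ᴴ = Aᴴ ⊗ₖ Bᴴ := by
  ext ⟨i, j⟩ ⟨k, l⟩
  simp [Matrix.conjTranspose_apply, Matrix.kroneckerMap_apply]

lemma PosSemidef.kron {A : Matrix n n ℂ} {B : Matrix m m ℂ}
    (hA : A.PosSemidef) (hB : B.PosSemidef) : (A ⊗ₖ B).PosSemidef :=
  hA.kronecker hB

lemma matAbs_kronecker (A : Matrix n n ℂ) (B : Matrix m m ℂ) :
    matAbs (A ⊗ₖ B) = matAbs A ⊗ₖ matAbs B := by
  refine matAbs_eq_of (PosSemidef.kron (matAbs_posSemidef A) (matAbs_posSemidef B)) ?_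
  rw [pow_two, ← Matrix.mul_kronecker_mul, ← pow_two, ← pow_two, matAbs_sq, matAbs_sq,
    conjTranspose_kronecker, ← Matrix.mul_kronecker_mul]

lemma matAbs_smul_half (M : Matrix n n ℂ) :
    matAbs ((1 / 2 : ℂ) • M) = (1 / 2 : ℂ) • matAbs M := by
  have half_nonneg : (0:ℂ) ≤ 1/2 := by
    rw [show (1/2:ℂ) = ((1/2:ℝ):ℂ) by norm_num]
    exact_mod_cast (by norm_num : (0:ℝ) ≤ 1/2)
  have hps : ((1 / 2 : ℂ) • matAbs M).PosSemidef :=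
    (matAbs_posSemidef M).smul half_nonneg
  refine matAbs_eq_of hps ?_
  rw [smul_pow, matAbs_sq, Matrix.conjTranspose_smul, Matrix.smul_mul, Matrix.mul_smul,
    smul_smul]
  congr 1
  simp [pow_two]

lemma matAbs_reindex (e : m ≃ n) (M : Matrix m m ℂ) :
    matAbs (Matrix.reindex e e M) = Matrix.reindex e e (matAbs M) := by
  refine matAbs_eq_of ((matAbs_posSemidef M).submatrix e.symm) ?_
  rw [Matrix.reindex_apply, Matrix.reindex_apply, pow_two, Matrix.submatrix_mul_equiv,
    Matrix.conjTranspose_submatrix, Matrix.submatrix_mul_equiv, ← pow_two, matAbs_sq]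

omit [DecidableEq n] [DecidableEq m] in
lemma trace_reindex (e : m ≃ n) (M : Matrix m m ℂ) :
    (Matrix.reindex e e M).trace = M.trace := by
  simp only [Matrix.trace, Matrix.diag, Matrix.reindex_apply, Matrix.submatrix_apply]
  exact Fintype.sum_equiv e.symm _ _ (fun i => rfl)

lemma trace_matAbs_im (M : Matrix n n ℂ) : (Matrix.trace (matAbs M)).im = 0 := by
  have h := matAbs_posSemidef M
  have hd : ∀ i, 0 ≤ matAbs M i i := fun i => h.diag_nonneg
  rw [Matrix.trace, Complex.im_sum]
  refine Finset.sum_eq_zero fun i _ => ?_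
  have := hd i
  rw [Complex.le_def] at this
  simpa using this.2.symm

end Aux

theorem traceDist_pow_of_recursive
    (ρ : Bool → (k : ℕ) → Matrix (Fin (2 ^ k)) (Fin (2 ^ k)) ℂ)
    (hpos : ∀ b, (ρ b 1).PosSemidef) (htr : ∀ b, (ρ b 1).trace = 1)
    (hrec0 : ∀ k : ℕ, 1 ≤ k → ρ false (k + 1) =
      Matrix.reindex (finProdFinEquiv.trans (finCongr (by ring : 2 ^ k * 2 ^ 1 = 2 ^ (k + 1))))
        (finProdFinEquiv.trans (finCongr (by ring : 2 ^ k * 2 ^ 1 = 2 ^ (k + 1))))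
        ((1 / 2 : ℂ) • (ρ false k ⊗ₖ ρ false 1 + ρ true k ⊗ₖ ρ true 1)))
    (hrec1 : ∀ k : ℕ, 1 ≤ k → ρ true (k + 1) =
      Matrix.reindex (finProdFinEquiv.trans (finCongr (by ring : 2 ^ k * 2 ^ 1 = 2 ^ (k + 1))))
        (finProdFinEquiv.trans (finCongr (by ring : 2 ^ k * 2 ^ 1 = 2 ^ (k + 1))))
        ((1 / 2 : ℂ) • (ρ false k ⊗ₖ ρ true 1 + ρ true k ⊗ₖ ρ false 1))) :
    ∀ k : ℕ, 1 ≤ k →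
      traceDist (ρ false k) (ρ true k) = (traceDist (ρ false 1) (ρ true 1)) ^ k := by
  intro k hk
  induction k, hk using Nat.le_induction with
  | base => simp
  | succ k hk ih =>
    set e : Fin (2 ^ k) × Fin (2 ^ 1) ≃ Fin (2 ^ (k + 1)) :=
      finProdFinEquiv.trans (finCongr (by ring : 2 ^ k * 2 ^ 1 = 2 ^ (k + 1))) with he
    have hΔ : ρ false (k + 1) - ρ true (k + 1) =
        Matrix.reindex e e
          ((1 / 2 : ℂ) • ((ρ false k - ρ true k) ⊗ₖ (ρ false 1 - ρ true 1))) := by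
      rw [hrec0 k hk, hrec1 k hk]
      ext i j
      simp only [Matrix.reindex_apply, Matrix.submatrix_apply, Matrix.sub_apply,
        Matrix.smul_apply, Matrix.add_apply, Matrix.kroneckerMap_apply, smul_eq_mul]
      ring
    have hx := trace_matAbs_im (ρ false k - ρ true k)
    have hy := trace_matAbs_im (ρ false 1 - ρ true 1)
    simp only [traceDist] at ih ⊢
    rw [hΔ, matAbs_reindex, trace_reindex, matAbs_smul_half, matAbs_kronecker,
      Matrix.trace_smul, Matrix.trace_kronecker, smul_eq_mul, Complex.mul_re,
      Complex.mul_re, hx, hy]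
    simp only [Complex.mul_im, hx, hy]
    norm_num
    linear_combination ((1/2) * (matAbs (ρ false 1 - ρ true 1)).trace.re) * ih
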